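/- arXiv:2307.06542 — 4 statements merged into one kernel-verified Lean document; each statement's English description precedes it below -/
import Mathlib

section
/- Let n be a positive integer, Q ∈ ℝ^{n×n} symmetric, σ ∈ (0,1), β_σ := log((1−σ)/σ), and x̃ ∈ {0,1}^n. Define the posterior P^{post}(x | x̃) := P_σ(x̃ | x) P_Q(x) / Σ_{x' ∈ {0,1}^n} P_σ(x̃ | x') P_Q(x'), where P_σ(x̃ | x) = ∏_i [σ(x̃_i − x_i)² + (1−σ)(1 − (x̃_i − x_i)²)] and P_Q is the Boltzmann distribution of Q. Then for every x ∈ {0,1}^n, P^{post}(x | x̃) = exp(−β_σ Σ_i (x̃_i − x_i)² − f_Q(x)) / Σ_{x'} exp(−β_σ Σ_i (x̃_i − x'_i)² − f_Q(x')), and this equals the Boltzmann distribution P_{Q̃^{β_σ,x̃}}(x) of the modified matrix Q̃^{β_σ,x̃}. -/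
noncomputable section

/-- Real-valued binary vector corresponding to a boolean vector. -/
def bvec {n : ℕ} (b : Fin n → Bool) : Fin n → ℝ := fun i => if b i then 1 else 0

/-- QUBO energy `f_Q(x) = Σ_{i,j} Q_{ij} x_i x_j`. -/
def quboEnergy {n : ℕ} (Q : Matrix (Fin n) (Fin n) ℝ) (x : Fin n → ℝ) : ℝ :=
  ∑ i, ∑ j, Q i j * x i * x j

/-- Boltzmann distribution on `{0,1}^n` with energy `f_Q`. -/
def boltzmann {n : ℕ} (Q : Matrix (Fin n) (Fin n) ℝ) (x : Fin n → Bool) : ℝ :=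
  Real.exp (-quboEnergy Q (bvec x)) /
    ∑ y : Fin n → Bool, Real.exp (-quboEnergy Q (bvec y))

/-- Salt-and-pepper noise transition probability `P_σ(x̃ | x)`. -/
def noiseProb {n : ℕ} (σ : ℝ) (xt x : Fin n → Bool) : ℝ :=
  ∏ i, (σ * (bvec xt i - bvec x i) ^ 2 + (1 - σ) * (1 - (bvec xt i - bvec x i) ^ 2))

/-- The modified QUBO matrix `Q̃^{ρ,x̃}`: off-diagonal entries of `Q`, and diagonal
entries `Q_{ii} + ρ(1 - 2x̃_i)`. -/
def modMatrix {n : ℕ} (Q : Matrix (Fin n) (Fin n) ℝ) (ρ : ℝ) (xt : Fin n → Bool) :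
    Matrix (Fin n) (Fin n) ℝ :=
  fun i j => if i = j then Q i i + ρ * (1 - 2 * bvec xt i) else Q i j

set_option linter.unnecessarySeqFocus false in
lemma ratio_eq {α : Type*} [Fintype α] (g h : α → ℝ) (c : ℝ) (hc : c ≠ 0)
    (hgh : ∀ y, g y = c * h y) (x : α) :
    g x / ∑ y, g y = h x / ∑ y, h y := by
  simp only [hgh, ← Finset.mul_sum]
  rw [mul_div_mul_left _ _ hc]

lemma noise_eq {n : ℕ} (σ : ℝ) (hσ : σ ∈ Set.Ioo (0:ℝ) 1) (β : ℝ)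
    (hβ : β = Real.log ((1 - σ) / σ)) (xt x : Fin n → Bool) :
    noiseProb σ xt x = (1 - σ) ^ n * Real.exp (-β * ∑ i, (bvec xt i - bvec x i) ^ 2) := by
  obtain ⟨h0, h1⟩ := hσ
  have h2 : (1:ℝ) - σ ≠ 0 := by linarith
  have hterm : ∀ i, σ * (bvec xt i - bvec x i) ^ 2 + (1 - σ) * (1 - (bvec xt i - bvec x i) ^ 2)
      = (1 - σ) * Real.exp (-β * (bvec xt i - bvec x i) ^ 2) := by
    intro i
    have hexp : Real.exp (-β) = σ / (1 - σ) := by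
      rw [hβ, Real.exp_neg, Real.exp_log (div_pos (by linarith) h0), inv_div]
    cases hxt : xt i <;> cases hx : x i <;>
      simp [bvec, hxt, hx, hexp] <;> field_simp
  rw [noiseProb]
  simp only [hterm]
  rw [Finset.prod_mul_distrib, Finset.prod_const, ← Real.exp_sum]
  congr 2
  · simp [Finset.card_univ]
  · rw [Finset.mul_sum]

lemma energy_mod {n : ℕ} (Q : Matrix (Fin n) (Fin n) ℝ) (β : ℝ) (xt x : Fin n → Bool) :
    quboEnergy (modMatrix Q β xt) (bvec x)
      = quboEnergy Q (bvec x) + β * ∑ i, (bvec xt i - bvec x i) ^ 2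
        - β * ∑ i, bvec xt i := by
  have hsq : ∀ (b : Fin n → Bool) i, bvec b i * bvec b i = bvec b i := by
    intro b i; cases h : b i <;> simp [bvec, h]
  have key : ∀ i j, modMatrix Q β xt i j * bvec x i * bvec x j
      = Q i j * bvec x i * bvec x j
        + (if i = j then β * (1 - 2 * bvec xt i) * bvec x i else 0) := by
    intro i j
    by_cases h : i = j
    · subst h; simp only [modMatrix, if_pos rfl, if_true]
      linear_combination (β * (1 - 2 * bvec xt i)) * hsq x i
    · simp [modMatrix, h]
  have hd : ∀ i, (bvec xt i - bvec x i) ^ 2 = bvec xt i + (1 - 2 * bvec xt i) * bvec x i := by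
    intro i; cases hxt : xt i <;> cases hx : x i <;> simp [bvec, hxt, hx] <;> ring
  have h1 : ∑ i, ∑ j, modMatrix Q β xt i j * bvec x i * bvec x j
      = (∑ i, ∑ j, Q i j * bvec x i * bvec x j)
        + ∑ i, β * (1 - 2 * bvec xt i) * bvec x i := by
    simp only [key, Finset.sum_add_distrib, Finset.sum_ite_eq, Finset.mem_univ, if_true]
  have h2 : ∑ i, (bvec xt i - bvec x i) ^ 2
      = (∑ i, bvec xt i) + ∑ i, (1 - 2 * bvec xt i) * bvec x i := by
    simp only [hd]; rw [Finset.sum_add_distrib]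
  have h3 : ∑ i, β * (1 - 2 * bvec xt i) * bvec x i
      = β * ∑ i, (1 - 2 * bvec xt i) * bvec x i := by
    rw [Finset.mul_sum]; exact Finset.sum_congr rfl fun i _ => by ring
  simp only [quboEnergy]
  rw [h1, h2, h3]; ring

/-- The posterior distribution `P^{post}(x|x̃) ∝ P_σ(x̃|x) P_Q(x)` equals the
Boltzmann form `exp(-β_σ Σᵢ(x̃ᵢ-xᵢ)² - f_Q(x))` normalized, and this is exactly the
Boltzmann distribution of the modified matrix `Q̃^{β_σ,x̃}`. -/
theorem stmt_3 (n : ℕ) (hn : 0 < n) (Q : Matrix (Fin n) (Fin n) ℝ) (hQ : Q.IsSymm)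
    (σ : ℝ) (hσ : σ ∈ Set.Ioo (0 : ℝ) 1)
    (β : ℝ) (hβ : β = Real.log ((1 - σ) / σ))
    (xt x : Fin n → Bool) :
    (noiseProb σ xt x * boltzmann Q x /
        ∑ x' : Fin n → Bool, noiseProb σ xt x' * boltzmann Q x'
      = Real.exp (-β * (∑ i, (bvec xt i - bvec x i) ^ 2) - quboEnergy Q (bvec x)) /
        ∑ x' : Fin n → Bool,
          Real.exp (-β * (∑ i, (bvec xt i - bvec x' i) ^ 2) - quboEnergy Q (bvec x'))) ∧
    (noiseProb σ xt x * boltzmann Q x /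
        ∑ x' : Fin n → Bool, noiseProb σ xt x' * boltzmann Q x'
      = boltzmann (modMatrix Q β xt) x) := by
  obtain ⟨h0, h1'⟩ := hσ
  set Z := ∑ y : Fin n → Bool, Real.exp (-quboEnergy Q (bvec y)) with hZdef
  have hZ : 0 < Z := Finset.sum_pos (fun y _ => Real.exp_pos _)
    ⟨fun _ => false, Finset.mem_univ _⟩
  have hc1 : (0:ℝ) < (1 - σ) ^ n / Z := div_pos (pow_pos (by linarith) n) hZ
  have hg : ∀ y, noiseProb σ xt y * boltzmann Q y
      = ((1 - σ) ^ n / Z) *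
        Real.exp (-β * (∑ i, (bvec xt i - bvec y i) ^ 2) - quboEnergy Q (bvec y)) := by
    intro y
    rw [noise_eq σ ⟨h0, h1'⟩ β hβ, boltzmann, ← hZdef,
      show -β * (∑ i, (bvec xt i - bvec y i) ^ 2) - quboEnergy Q (bvec y)
        = -β * (∑ i, (bvec xt i - bvec y i) ^ 2) + -quboEnergy Q (bvec y) from by ring,
      Real.exp_add]
    ring
  refine ⟨ratio_eq _ _ _ (ne_of_gt hc1) hg x, ?_⟩
  have hg2 : ∀ y, noiseProb σ xt y * boltzmann Q y
      = ((1 - σ) ^ n / Z * Real.exp (-(β * ∑ i, bvec xt i))) *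
        Real.exp (-quboEnergy (modMatrix Q β xt) (bvec y)) := by
    intro y
    rw [hg y, energy_mod, mul_assoc, ← Real.exp_add]
    congr 2
    ring
  rw [boltzmann]
  exact ratio_eq _ _ _ (ne_of_gt (mul_pos hc1 (Real.exp_pos _))) hg2 x

end
end

section
/- Let n be a positive integer, Q ∈ ℝ^{n×n} symmetric, σ ∈ (0,1), β_σ := log((1−σ)/σ), and x̃ ∈ {0,1}^n. Then x ∈ {0,1}^n minimizes the penalized objective f_{Q,x̃,β_σ}(x) = f_Q(x) + β_σ·Σ_i (x_i − x̃_i)² over {0,1}^n if and only if x maximizes the posterior x ↦ P_σ(x̃ | x) P_Q(x) over {0,1}^n, i.e., setting ρ := log((1−σ)/σ) makes the denoised image the maximum a posteriori estimator of the noise-free image. -/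
noncomputable section

/-- With `ρ = β_σ = log((1-σ)/σ)`, a binary vector `x` minimizes the
penalized objective `f_Q(x) + β_σ·Σᵢ (xᵢ - x̃ᵢ)²` over `{0,1}^n` if and only if it
maximizes the posterior `x ↦ P_σ(x̃|x) P_Q(x)`, i.e. the denoised image is the MAP
estimator of the noise-free image. -/
theorem stmt_4 (n : ℕ) (hn : 0 < n) (Q : Matrix (Fin n) (Fin n) ℝ) (hQ : Q.IsSymm)
    (σ : ℝ) (hσ : σ ∈ Set.Ioo (0 : ℝ) 1)
    (β : ℝ) (hβ : β = Real.log ((1 - σ) / σ))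
    (xt x : Fin n → Bool) :
    (∀ y : Fin n → Bool,
        quboEnergy Q (bvec x) + β * ∑ i, (bvec x i - bvec xt i) ^ 2
          ≤ quboEnergy Q (bvec y) + β * ∑ i, (bvec y i - bvec xt i) ^ 2)
    ↔ (∀ y : Fin n → Bool,
        noiseProb σ xt y * boltzmann Q y ≤ noiseProb σ xt x * boltzmann Q x) := by
  obtain ⟨hσ0, hσ1⟩ := hσ
  have h1σ : (0:ℝ) < 1 - σ := by linarith
  set Z := ∑ y : Fin n → Bool, Real.exp (-quboEnergy Q (bvec y)) with hZ
  have hZpos : 0 < Z :=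
    Finset.sum_pos (fun y _ => Real.exp_pos _) Finset.univ_nonempty
  have hc : 0 < (1 - σ) ^ n / Z := div_pos (pow_pos h1σ n) hZpos
  have key : ∀ y : Fin n → Bool,
      noiseProb σ xt y * boltzmann Q y =
        ((1 - σ) ^ n / Z) *
          Real.exp (-(quboEnergy Q (bvec y) + β * ∑ i, (bvec y i - bvec xt i) ^ 2)) := by
    intro y
    have hfac : ∀ i, σ * (bvec xt i - bvec y i) ^ 2 + (1 - σ) * (1 - (bvec xt i - bvec y i) ^ 2)
        = (1 - σ) * Real.exp (-(β * (bvec y i - bvec xt i) ^ 2)) := by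
      intro i
      have hexp : Real.exp (-β) = σ / (1 - σ) := by
        rw [hβ, Real.exp_neg, Real.exp_log (div_pos h1σ hσ0)]
        field_simp
      rcases Bool.eq_false_or_eq_true (xt i) with h1 | h1 <;>
        rcases Bool.eq_false_or_eq_true (y i) with h2 | h2 <;>
          simp [bvec, h1, h2, hexp] <;> field_simp
    have hnp : noiseProb σ xt y =
        (1 - σ) ^ n * Real.exp (-(β * ∑ i, (bvec y i - bvec xt i) ^ 2)) := by
      unfold noiseProb
      rw [Finset.prod_congr rfl (fun i _ => hfac i), Finset.prod_mul_distrib]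
      simp [← Real.exp_sum, Finset.mul_sum]
    rw [hnp]
    unfold boltzmann
    rw [← hZ, neg_add, Real.exp_add]
    ring
  constructor
  · intro h y
    rw [key y, key x]
    exact mul_le_mul_of_nonneg_left (Real.exp_le_exp.2 (neg_le_neg (h y))) hc.le
  · intro h y
    have := h y
    rw [key y, key x] at this
    have := Real.exp_le_exp.1 (le_of_mul_le_mul_left this hc)
    linarith

end
end

section
/- Let n be a positive integer, Q ∈ ℝ^{n×n} a diagonal matrix, σ ∈ (0, 1/2), and ρ ≥ log((1−σ)/σ). Suppose I_ρ := {i : |Q_{ii}| > ρ} is nonempty. Let X be distributed according to the Boltzmann distribution P_Q on {0,1}^n, let X̃ be X afflicted by salt-and-pepper noise of level σ (each coordinate flipped independently with probability σ), and let X* be the denoised image given by X*_i = 1 if Q_{ii} < −ρ, X*_i = 0 if Q_{ii} > ρ, and X*_i = X̃_i otherwise (this X* minimizes f_Q(x) + ρ·Σ_i (x_i − X̃_i)² over {0,1}^n). Then E[Σ_{i=1}^n 1(X*_i = X_i)] > E[Σ_{i=1}^n 1(X̃_i = X_i)]; i.e., the expected overlap of the denoised image with the true image is strictly larger than that of the noisy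 image. -/
noncomputable section

/-- Probability of the i.i.d. Bernoulli(σ) noise pattern `ε`. -/
def noisePat {n : ℕ} (σ : ℝ) (ε : Fin n → Bool) : ℝ :=
  ∏ i, if ε i then σ else 1 - σ

/-- The denoised image: `X*_i = 1` if `Q_{ii} < -ρ`, `X*_i = 0` if `Q_{ii} > ρ`, and
`X*_i = X̃_i` otherwise (this minimizes the penalized objective when `Q` is diagonal). -/
def denoised {n : ℕ} (Q : Matrix (Fin n) (Fin n) ℝ) (ρ : ℝ) (xt : Fin n → Bool) :
    Fin n → Bool :=
  fun i => if Q i i < -ρ then true else if ρ < Q i i then false else xt i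

lemma sum_prod_bool {n : ℕ} (f : Fin n → Bool → ℝ) :
    ∑ x : Fin n → Bool, ∏ i, f i (x i) = ∏ i, (f i false + f i true) := by
  rw [← Fintype.prod_sum]
  simp [Fintype.sum_bool, add_comm]

lemma sum_prod_bool_ind {n : ℕ} (f : Fin n → Bool → ℝ) (i₀ : Fin n) (b₀ : Bool) :
    ∑ x : Fin n → Bool, (∏ i, f i (x i)) * (if x i₀ = b₀ then 1 else 0)
      = f i₀ b₀ * ∏ i ∈ Finset.univ.erase i₀, (f i false + f i true) := by
  obtain ⟨g, hg⟩ : ∃ g : Fin n → Bool → ℝ,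
      g = fun i b => if i = i₀ then (if b = b₀ then f i b else 0) else f i b := ⟨_, rfl⟩
  have key : ∀ x : Fin n → Bool, (∏ i, f i (x i)) * (if x i₀ = b₀ then 1 else 0)
      = ∏ i, g i (x i) := by
    intro x
    by_cases h : x i₀ = b₀
    · rw [if_pos h, mul_one]
      apply Finset.prod_congr rfl
      intro i _
      by_cases hi : i = i₀ <;> simp [hg, hi, h]
    · rw [if_neg h, mul_zero]
      have : g i₀ (x i₀) = 0 := by simp [hg, h]
      exact (Finset.prod_eq_zero (Finset.mem_univ i₀) this).symm
  rw [Finset.sum_congr rfl fun x _ => key x, sum_prod_bool g,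
    ← Finset.mul_prod_erase Finset.univ _ (Finset.mem_univ i₀)]
  congr 1
  · cases b₀ <;> simp [hg]
  · refine Finset.prod_congr rfl fun i hi => ?_
    simp [hg, Finset.ne_of_mem_erase hi]

lemma energy_diag {n : ℕ} (Q : Matrix (Fin n) (Fin n) ℝ) (hQ : Q.IsDiag) (x : Fin n → Bool) :
    quboEnergy Q (bvec x) = ∑ i, if x i then Q i i else 0 := by
  unfold quboEnergy
  refine Finset.sum_congr rfl fun i _ => ?_
  rw [Finset.sum_eq_single i]
  · by_cases h : x i <;> simp [bvec, h]
  · intro j _ hj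
    rw [hQ (Ne.symm hj), zero_mul, zero_mul]
  · simp

lemma exp_energy_prod {n : ℕ} (Q : Matrix (Fin n) (Fin n) ℝ) (hQ : Q.IsDiag)
    (x : Fin n → Bool) :
    Real.exp (-quboEnergy Q (bvec x))
      = ∏ i, (if x i then Real.exp (-Q i i) else 1) := by
  rw [energy_diag Q hQ, ← Finset.sum_neg_distrib, Real.exp_sum]
  refine Finset.prod_congr rfl fun i _ => ?_
  by_cases h : x i <;> simp [h]

lemma Z_prod {n : ℕ} (Q : Matrix (Fin n) (Fin n) ℝ) (hQ : Q.IsDiag) :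
    ∑ y : Fin n → Bool, Real.exp (-quboEnergy Q (bvec y))
      = ∏ i, (1 + Real.exp (-Q i i)) := by
  rw [Finset.sum_congr rfl fun y _ => exp_energy_prod Q hQ y]
  rw [sum_prod_bool (fun i b => if b then Real.exp (-Q i i) else 1)]
  simp

lemma Z_pos {n : ℕ} (Q : Matrix (Fin n) (Fin n) ℝ) :
    0 < ∑ y : Fin n → Bool, Real.exp (-quboEnergy Q (bvec y)) := by
  refine Finset.sum_pos (fun y _ => Real.exp_pos _) ⟨fun _ => false, Finset.mem_univ _⟩

lemma boltz_total {n : ℕ} (Q : Matrix (Fin n) (Fin n) ℝ) :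
    ∑ x : Fin n → Bool, boltzmann Q x = 1 := by
  unfold boltzmann
  rw [← Finset.sum_div, div_self (Z_pos Q).ne']

lemma boltz_marginal {n : ℕ} (Q : Matrix (Fin n) (Fin n) ℝ) (hQ : Q.IsDiag)
    (i₀ : Fin n) (b₀ : Bool) :
    ∑ x : Fin n → Bool, boltzmann Q x * (if x i₀ = b₀ then 1 else 0)
      = (if b₀ then Real.exp (-Q i₀ i₀) else 1) / (1 + Real.exp (-Q i₀ i₀)) := by
  unfold boltzmann
  have hrw : ∀ x : Fin n → Bool,
      Real.exp (-quboEnergy Q (bvec x)) /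
        (∑ y : Fin n → Bool, Real.exp (-quboEnergy Q (bvec y)))
        * (if x i₀ = b₀ then 1 else 0)
      = (∏ i, (fun i b => if b then Real.exp (-Q i i) else 1) i (x i))
          * (if x i₀ = b₀ then 1 else 0)
        / (∑ y : Fin n → Bool, Real.exp (-quboEnergy Q (bvec y))) := by
    intro x; rw [← exp_energy_prod Q hQ]; ring
  rw [Finset.sum_congr rfl fun x _ => hrw x, ← Finset.sum_div,
    sum_prod_bool_ind (fun i b => if b then Real.exp (-Q i i) else 1) i₀ b₀,
    Z_prod Q hQ, ← Finset.mul_prod_erase Finset.univ _ (Finset.mem_univ i₀)]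
  have hprodpos : 0 < ∏ i ∈ Finset.univ.erase i₀, (1 + Real.exp (-Q i i)) :=
    Finset.prod_pos fun i _ => by positivity
  have : ∀ i ∈ Finset.univ.erase i₀,
      ((fun i b => if b then Real.exp (-Q i i) else 1) i false
        + (fun i b => if b then Real.exp (-Q i i) else 1) i true)
      = 1 + Real.exp (-Q i i) := by intro i _; simp
  rw [Finset.prod_congr rfl this, mul_div_mul_right _ _ hprodpos.ne']

lemma noise_total {n : ℕ} {σ : ℝ} :
    ∑ ε : Fin n → Bool, noisePat σ ε = 1 := by
  unfold noisePat
  rw [sum_prod_bool (fun _ b => if b then σ else 1 - σ)]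
  simp

lemma noise_marginal {n : ℕ} {σ : ℝ} (i₀ : Fin n) :
    ∑ ε : Fin n → Bool, noisePat σ ε * (if ε i₀ = false then 1 else 0) = 1 - σ := by
  unfold noisePat
  rw [sum_prod_bool_ind (fun _ b => if b then σ else 1 - σ) i₀ false]
  simp


lemma Tn_eq {n : ℕ} (Q : Matrix (Fin n) (Fin n) ℝ) (σ : ℝ) (i : Fin n) :
    ∑ x : Fin n → Bool, ∑ ε : Fin n → Bool,
        boltzmann Q x * noisePat σ ε * (if xor (x i) (ε i) = x i then (1 : ℝ) else 0)
      = 1 - σ := by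
  have hind : ∀ x ε : Fin n → Bool,
      boltzmann Q x * noisePat σ ε * (if xor (x i) (ε i) = x i then (1 : ℝ) else 0)
        = boltzmann Q x * (noisePat σ ε * (if ε i = false then (1 : ℝ) else 0)) := by
    intro x ε
    have : (if xor (x i) (ε i) = x i then (1 : ℝ) else 0)
        = (if ε i = false then (1 : ℝ) else 0) := by
      cases hx : x i <;> cases he : ε i <;> simp
    rw [this, mul_assoc]
  calc ∑ x : Fin n → Bool, ∑ ε : Fin n → Bool,
          boltzmann Q x * noisePat σ ε * (if xor (x i) (ε i) = x i then (1 : ℝ) else 0)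
      = ∑ x : Fin n → Bool, boltzmann Q x *
          ∑ ε : Fin n → Bool, noisePat σ ε * (if ε i = false then (1 : ℝ) else 0) := by
        refine Finset.sum_congr rfl fun x _ => ?_
        rw [Finset.mul_sum]
        exact Finset.sum_congr rfl fun ε _ => hind x ε
    _ = 1 - σ := by
        rw [Finset.sum_congr rfl fun x _ => by rw [noise_marginal i], ← Finset.sum_mul,
          boltz_total, one_mul]

lemma Td_eq {n : ℕ} (Q : Matrix (Fin n) (Fin n) ℝ) (hQ : Q.IsDiag) (σ ρ : ℝ) (i : Fin n)
    (b : Bool) (hb : ∀ xt : Fin n → Bool, denoised Q ρ xt i = b) :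
    ∑ x : Fin n → Bool, ∑ ε : Fin n → Bool,
        boltzmann Q x * noisePat σ ε *
          (if denoised Q ρ (fun j => xor (x j) (ε j)) i = x i then (1 : ℝ) else 0)
      = (if b then Real.exp (-Q i i) else 1) / (1 + Real.exp (-Q i i)) := by
  have hind : ∀ x ε : Fin n → Bool,
      boltzmann Q x * noisePat σ ε *
          (if denoised Q ρ (fun j => xor (x j) (ε j)) i = x i then (1 : ℝ) else 0)
        = (boltzmann Q x * (if x i = b then (1 : ℝ) else 0)) * noisePat σ ε := by
    intro x ε
    have : (if denoised Q ρ (fun j => xor (x j) (ε j)) i = x i then (1 : ℝ) else 0)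
        = (if x i = b then (1 : ℝ) else 0) := by
      rw [hb]
      by_cases h : x i = b
      · rw [if_pos h.symm, if_pos h]
      · rw [if_neg (fun he => h he.symm), if_neg h]
    rw [this]; ring
  calc ∑ x : Fin n → Bool, ∑ ε : Fin n → Bool,
          boltzmann Q x * noisePat σ ε *
            (if denoised Q ρ (fun j => xor (x j) (ε j)) i = x i then (1 : ℝ) else 0)
      = ∑ x : Fin n → Bool, (boltzmann Q x * (if x i = b then (1 : ℝ) else 0)) *
          ∑ ε : Fin n → Bool, noisePat σ ε := by
        refine Finset.sum_congr rfl fun x _ => ?_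
        rw [Finset.mul_sum]
        exact Finset.sum_congr rfl fun ε _ => hind x ε
    _ = (if b then Real.exp (-Q i i) else 1) / (1 + Real.exp (-Q i i)) := by
        rw [noise_total]
        simp only [mul_one]
        exact boltz_marginal Q hQ i b


/-- With `Q` diagonal, `σ ∈ (0,1/2)`, `ρ ≥ log((1-σ)/σ)`, and
`I_ρ = {i : |Q_{ii}| > ρ}` nonempty, the expected number of pixels on which the
denoised image `X*` agrees with the true image `X ~ P_Q` is strictly larger than the
expected number on which the noisy image `X̃` agrees with `X`. The expectation is the
explicit sum over the image `x` and the independent Bernoulli(σ) noise pattern `ε`,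
with `X̃ᵢ = xᵢ XOR εᵢ`. -/
theorem stmt_6 (n : ℕ) (hn : 0 < n) (Q : Matrix (Fin n) (Fin n) ℝ) (hQ : Q.IsDiag)
    (σ : ℝ) (hσ : σ ∈ Set.Ioo (0 : ℝ) (1 / 2))
    (ρ : ℝ) (hρ : Real.log ((1 - σ) / σ) ≤ ρ)
    (hI : ∃ i, ρ < |Q i i|) :
    (∑ x : Fin n → Bool, ∑ ε : Fin n → Bool,
        boltzmann Q x * noisePat σ ε *
          ∑ i, (if denoised Q ρ (fun j => xor (x j) (ε j)) i = x i then (1 : ℝ) else 0))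
    > (∑ x : Fin n → Bool, ∑ ε : Fin n → Bool,
        boltzmann Q x * noisePat σ ε *
          ∑ i, (if xor (x i) (ε i) = x i then (1 : ℝ) else 0)) := by
  obtain ⟨hσ0, hσ2⟩ := hσ
  have hσ1 : σ < 1 := by linarith
  have hr1 : (1 : ℝ) < (1 - σ) / σ := by
    rw [lt_div_iff₀ hσ0]; linarith
  have hr0 : (0 : ℝ) < (1 - σ) / σ := by linarith
  have hρ0 : 0 < ρ := lt_of_lt_of_le (Real.log_pos hr1) hρ
  have hexpρ : (1 - σ) / σ ≤ Real.exp ρ := by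
    calc (1 - σ) / σ = Real.exp (Real.log ((1 - σ) / σ)) := (Real.exp_log hr0).symm
      _ ≤ Real.exp ρ := Real.exp_le_exp.mpr hρ
  -- rearrange both sides
  have rearrange : ∀ F : (Fin n → Bool) → (Fin n → Bool) → Fin n → ℝ,
      (∑ x : Fin n → Bool, ∑ ε : Fin n → Bool,
        boltzmann Q x * noisePat σ ε * ∑ i, F x ε i)
      = ∑ i, ∑ x : Fin n → Bool, ∑ ε : Fin n → Bool,
          boltzmann Q x * noisePat σ ε * F x ε i := by
    intro F
    calc (∑ x : Fin n → Bool, ∑ ε : Fin n → Bool,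
            boltzmann Q x * noisePat σ ε * ∑ i, F x ε i)
        = ∑ x : Fin n → Bool, ∑ ε : Fin n → Bool, ∑ i,
            boltzmann Q x * noisePat σ ε * F x ε i := by
          simp only [Finset.mul_sum]
      _ = ∑ x : Fin n → Bool, ∑ i, ∑ ε : Fin n → Bool,
            boltzmann Q x * noisePat σ ε * F x ε i :=
          Finset.sum_congr rfl fun x _ => Finset.sum_comm
      _ = ∑ i, ∑ x : Fin n → Bool, ∑ ε : Fin n → Bool,
            boltzmann Q x * noisePat σ ε * F x ε i := Finset.sum_comm
  rw [gt_iff_lt,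
    rearrange (fun x ε i => if xor (x i) (ε i) = x i then (1 : ℝ) else 0),
    rearrange (fun x ε i =>
      if denoised Q ρ (fun j => xor (x j) (ε j)) i = x i then (1 : ℝ) else 0)]
  -- strict inequality at indices in I_ρ
  have hstrict : ∀ i : Fin n, ρ < |Q i i| →
      (∑ x : Fin n → Bool, ∑ ε : Fin n → Bool,
        boltzmann Q x * noisePat σ ε *
          (if xor (x i) (ε i) = x i then (1 : ℝ) else 0))
      < ∑ x : Fin n → Bool, ∑ ε : Fin n → Bool,
        boltzmann Q x * noisePat σ ε *
          (if denoised Q ρ (fun j => xor (x j) (ε j)) i = x i then (1 : ℝ) else 0) := by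
    intro i hi
    rw [Tn_eq Q σ i]
    have hE : (0 : ℝ) < Real.exp (-Q i i) := Real.exp_pos _
    have hD : (0 : ℝ) < 1 + Real.exp (-Q i i) := by linarith
    rcases lt_abs.mp hi with h | h
    · -- ρ < Q i i : denoised is false
      have hb : ∀ xt : Fin n → Bool, denoised Q ρ xt i = false := by
        intro xt
        have : ¬ Q i i < -ρ := by linarith
        simp [denoised, this, h]
      rw [Td_eq Q hQ σ ρ i false hb]
      simp only [if_neg Bool.false_ne_true, Bool.false_eq_true, if_false]
      rw [lt_div_iff₀ hD]
      have hElt : Real.exp (-Q i i) < σ / (1 - σ) := by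
        have h1 : Real.exp (-Q i i) < Real.exp (-ρ) := by
          apply Real.exp_lt_exp.mpr; linarith
        have h2 : Real.exp (-ρ) ≤ σ / (1 - σ) := by
          rw [Real.exp_neg]
          rw [inv_le_comm₀ (Real.exp_pos _) (div_pos hσ0 (by linarith))]
          calc (σ / (1 - σ))⁻¹ = (1 - σ) / σ := by
                rw [inv_div]
            _ ≤ Real.exp ρ := hexpρ
        linarith
      have h3 : Real.exp (-Q i i) * (1 - σ) < σ :=
        (lt_div_iff₀ (by linarith : (0:ℝ) < 1 - σ)).mp hElt
      nlinarith
    · -- Q i i < -ρ : denoised is true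
      have h' : Q i i < -ρ := by linarith
      have hb : ∀ xt : Fin n → Bool, denoised Q ρ xt i = true := by
        intro xt; simp [denoised, h']
      rw [Td_eq Q hQ σ ρ i true hb, if_pos rfl, lt_div_iff₀ hD]
      have hEgt : (1 - σ) / σ < Real.exp (-Q i i) := by
        have h1 : Real.exp ρ < Real.exp (-Q i i) := by
          apply Real.exp_lt_exp.mpr; linarith
        linarith
      have h3 : 1 - σ < Real.exp (-Q i i) * σ := (div_lt_iff₀ hσ0).mp hEgt
      nlinarith
  refine Finset.sum_lt_sum ?_ ?_
  · intro i _
    by_cases hi : ρ < |Q i i|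
    · exact le_of_lt (hstrict i hi)
    · -- equal termwise
      refine le_of_eq (Finset.sum_congr rfl fun x _ => Finset.sum_congr rfl fun ε _ => ?_)
      have h1 : ¬ Q i i < -ρ := by
        intro h; exact hi (lt_abs.mpr (Or.inr (by linarith)))
      have h2 : ¬ ρ < Q i i := fun h => hi (lt_abs.mpr (Or.inl h))
      have : denoised Q ρ (fun j => xor (x j) (ε j)) i = xor (x i) (ε i) := by
        simp [denoised, h1, h2]
      rw [this]
  · obtain ⟨i₀, hi₀⟩ := hI
    exact ⟨i₀, Finset.mem_univ i₀, hstrict i₀ hi₀⟩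


end
end

section
/- Let n be a positive integer, Q ∈ ℝ^{n×n} a diagonal matrix, ρ > 0, and x̃ ∈ {0,1}^n. Then the vector x* ∈ {0,1}^n defined by x*_i = 1 if Q_{ii} < −ρ, x*_i = 0 if Q_{ii} > ρ, and x*_i = x̃_i if |Q_{ii}| ≤ ρ, minimizes the penalized objective f_{Q,x̃,ρ}(x) = f_Q(x) + ρ·Σ_i (x_i − x̃_i)² over all x ∈ {0,1}^n. -/
noncomputable section

/-- The candidate minimizer: `x*_i = 1` if `Q_{ii} < -ρ`, `x*_i = 0` if `Q_{ii} > ρ`,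
and `x*_i = x̃_i` if `|Q_{ii}| ≤ ρ`. -/
def xstar {n : ℕ} (Q : Matrix (Fin n) (Fin n) ℝ) (ρ : ℝ) (xt : Fin n → ℝ) : Fin n → ℝ :=
  fun i => if Q i i < -ρ then 1 else if ρ < Q i i then 0 else xt i

/-- For a diagonal matrix `Q`, the vector `x*` defined coordinatewise by
thresholding the diagonal entries against `±ρ` minimizes the penalized objective
`f_Q(x) + ρ·Σᵢ (xᵢ - x̃ᵢ)²` over all binary vectors `x ∈ {0,1}^n`. -/
theorem stmt_7 (n : ℕ) (hn : 0 < n) (Q : Matrix (Fin n) (Fin n) ℝ) (hQ : Q.IsDiag)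
    (ρ : ℝ) (hρ : 0 < ρ)
    (xt : Fin n → ℝ) (hxt : ∀ i, xt i = 0 ∨ xt i = 1) :
    (∀ i, xstar Q ρ xt i = 0 ∨ xstar Q ρ xt i = 1) ∧
    ∀ x : Fin n → ℝ, (∀ i, x i = 0 ∨ x i = 1) →
      quboEnergy Q (xstar Q ρ xt) + ρ * ∑ i, (xstar Q ρ xt i - xt i) ^ 2
        ≤ quboEnergy Q x + ρ * ∑ i, (x i - xt i) ^ 2 := by
  have hbin : ∀ i, xstar Q ρ xt i = 0 ∨ xstar Q ρ xt i = 1 := by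
    intro i
    unfold xstar
    split_ifs with h1 h2
    · right; rfl
    · left; rfl
    · exact hxt i
  refine ⟨hbin, ?_⟩
  intro x hx
  have hdiag : ∀ y : Fin n → ℝ, quboEnergy Q y = ∑ i, Q i i * y i * y i := by
    intro y
    unfold quboEnergy
    refine Finset.sum_congr rfl fun i _ => ?_
    refine Finset.sum_eq_single i (fun j _ hj => ?_) (fun h => absurd (Finset.mem_univ i) h)
    rw [hQ (Ne.symm hj)]; ring
  rw [hdiag, hdiag, Finset.mul_sum, Finset.mul_sum, ← Finset.sum_add_distrib,
    ← Finset.sum_add_distrib]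
  refine Finset.sum_le_sum fun i _ => ?_
  set q := Q i i with hq
  unfold xstar
  rw [← hq]
  rcases hxt i with ht | ht <;> rcases hx i with hb | hb <;> rw [ht, hb] <;>
    split_ifs with h1 h2 <;> nlinarith

end
end
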